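/- arXiv:1609.03660 — 3 statements merged into one kernel-verified Lean document; each statement's English description precedes it below -/
import Mathlib

section
/- Let p be an odd prime and let q be a complex number with |q| < 1. Then F(q^{p²}) · ∏_{k=0}^{p−1} F(ζ_p^k · q) = F(q^p)^{p+1}, where ζ_p = e^{2πi/p}. -/
open Complex

/-- F(q) = ∏_{ℓ=1}^∞ (1 − q^ℓ). -/
noncomputable def Fprod (q : ℂ) : ℂ := ∏' ℓ : ℕ, (1 - q ^ (ℓ + 1))

namespace Stmt12Aux

lemma abs_pow_lt_one {x : ℂ} (hx : ‖x‖ < 1) (n : ℕ) :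
    ‖x ^ (n + 1)‖ < 1 := by
  rw [norm_pow]
  exact pow_lt_one₀ (norm_nonneg _) hx (Nat.succ_ne_zero n)

lemma one_sub_ne_zero {x : ℂ} (hx : ‖x‖ < 1) (n : ℕ) :
    (1 : ℂ) - x ^ (n + 1) ≠ 0 := by
  have h := abs_pow_lt_one hx n
  intro hc
  rw [sub_eq_zero] at hc
  rw [← hc] at h
  simp at h

lemma summable_log {x : ℂ} (hx : ‖x‖ < 1) :
    Summable fun n : ℕ => Complex.log (1 - x ^ (n + 1)) := by
  set a := ‖x‖ with ha
  have h0 : 0 ≤ a := norm_nonneg _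
  set C : ℝ := a * (1 - a)⁻¹ / 2 + 1 with hC
  have hgeo : Summable fun n : ℕ => C * a ^ (n + 1) := by
    have h1 := (summable_geometric_of_lt_one h0 hx).mul_left C
    exact h1.comp_injective (add_left_injective 1)
  refine Summable.of_norm_bounded hgeo ?_
  intro n
  have hzlt : ‖-(x ^ (n + 1))‖ < 1 := by
    rw [norm_neg]; exact abs_pow_lt_one hx n
  have hn : ‖-(x ^ (n + 1))‖ = a ^ (n + 1) := by
    rw [norm_neg, norm_pow]
  have h1 : a ^ (n + 1) ≤ a := pow_le_of_le_one h0 hx.le (Nat.succ_ne_zero n)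
  have h2 : (1 - a ^ (n + 1))⁻¹ ≤ (1 - a)⁻¹ := by
    apply inv_anti₀ <;> linarith
  have h3 : (0:ℝ) ≤ (1 - a ^ (n + 1))⁻¹ := by
    apply inv_nonneg.mpr; linarith
  calc ‖Complex.log (1 - x ^ (n + 1))‖
      = ‖Complex.log (1 + -(x ^ (n + 1)))‖ := by rw [sub_eq_add_neg]
    _ ≤ ‖-(x ^ (n + 1))‖ ^ 2 * (1 - ‖-(x ^ (n + 1))‖)⁻¹ / 2 + ‖-(x ^ (n + 1))‖ :=
        Complex.norm_log_one_add_le hzlt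
    _ = (a ^ (n + 1)) ^ 2 * (1 - a ^ (n + 1))⁻¹ / 2 + a ^ (n + 1) := by rw [hn]
    _ ≤ C * a ^ (n + 1) := by
        have h4 := mul_le_mul h1 h2 h3 h0
        nlinarith [pow_nonneg h0 (n + 1)]

lemma multipliable_F {x : ℂ} (hx : ‖x‖ < 1) :
    Multipliable fun n : ℕ => (1 : ℂ) - x ^ (n + 1) :=
  Complex.multipliable_of_summable_log (summable_log hx)

lemma multipliable_F_subtype {x : ℂ} (hx : ‖x‖ < 1) (s : Set ℕ) :
    Multipliable fun n : s => (1 : ℂ) - x ^ ((n : ℕ) + 1) :=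
  Complex.multipliable_of_summable_log (f := fun n : s => (1 : ℂ) - x ^ ((n : ℕ) + 1))
    ((summable_log hx).subtype s)

lemma multipliable_pow {β : Type*} {f : β → ℂ} (hf : Multipliable f) (m : ℕ) :
    Multipliable fun b => f b ^ m := by
  induction m with
  | zero => simpa using multipliable_one
  | succ n ih => exact (ih.mul hf).congr fun b => (pow_succ (f b) n).symm

lemma tprod_pow {β : Type*} {f : β → ℂ} (hf : Multipliable f) (m : ℕ) :
    ∏' b, f b ^ m = (∏' b, f b) ^ m := by
  induction m with
  | zero => simp
  | succ n ih =>
    simp only [pow_succ]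
    rw [← ih, ← (multipliable_pow hf n).tprod_mul hf]

lemma prod_sub_primroot {p : ℕ} (hp : 0 < p) {ζ : ℂ} (hζ : IsPrimitiveRoot ζ p) (t : ℂ) :
    ∏ k ∈ Finset.range p, (t - ζ ^ k) = t ^ p - 1 := by
  haveI : NeZero p := ⟨hp.ne'⟩
  have h := Polynomial.X_pow_sub_one_eq_prod hp hζ
  have h2 := congrArg (Polynomial.eval t) h
  simp only [Polynomial.eval_sub, Polynomial.eval_pow, Polynomial.eval_X, Polynomial.eval_one,
    Polynomial.eval_prod, Polynomial.eval_C] at h2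
  have himg : Polynomial.nthRootsFinset p (1 : ℂ) = (Finset.range p).image (ζ ^ ·) := by
    ext μ
    simp only [Finset.mem_image, Finset.mem_range]
    rw [Polynomial.mem_nthRootsFinset hp]
    constructor
    · intro hμ
      obtain ⟨i, hi, rfl⟩ := hζ.eq_pow_of_pow_eq_one hμ
      exact ⟨i, hi, rfl⟩
    · rintro ⟨i, hi, rfl⟩
      rw [← pow_mul, mul_comm, pow_mul, hζ.pow_eq_one, one_pow]
  rw [h2, himg, Finset.prod_image]
  intro i hi j hj hij
  exact hζ.pow_inj (Finset.mem_range.mp hi) (Finset.mem_range.mp hj) hij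

lemma prod_one_sub_mul {p : ℕ} (hp : 0 < p) (hodd : Odd p) {ζ : ℂ} (hζ : IsPrimitiveRoot ζ p)
    (x : ℂ) : ∏ k ∈ Finset.range p, (1 - ζ ^ k * x) = 1 - x ^ p := by
  have hζ0 : ζ ≠ 0 := by
    intro h
    have h1 := hζ.pow_eq_one
    rw [h, zero_pow hp.ne'] at h1
    exact zero_ne_one h1
  have hinv : IsPrimitiveRoot ζ⁻¹ p := hζ.inv
  have hodd' := hodd
  obtain ⟨r, hr⟩ := hodd
  have hsum : (∑ k ∈ Finset.range p, k) = p * r := by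
    have h2 := Finset.sum_range_id_mul_two p
    have h3 : p * (p - 1) = p * r * 2 := by
      subst hr
      have h4 : 2 * r + 1 - 1 = 2 * r := by omega
      rw [h4]; ring
    exact Nat.eq_of_mul_eq_mul_right (by norm_num) (h2.trans h3)
  calc ∏ k ∈ Finset.range p, (1 - ζ ^ k * x)
      = ∏ k ∈ Finset.range p, ((-1) * ζ ^ k * (x - ζ⁻¹ ^ k)) := by
        refine Finset.prod_congr rfl fun k _ => ?_
        have hm : ζ ^ k * ζ⁻¹ ^ k = 1 := by
          rw [← mul_pow, mul_inv_cancel₀ hζ0, one_pow]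
        linear_combination -hm
    _ = ((-1 : ℂ) ^ p * ζ ^ (∑ k ∈ Finset.range p, k)) *
          ∏ k ∈ Finset.range p, (x - ζ⁻¹ ^ k) := by
        rw [Finset.prod_mul_distrib, Finset.prod_mul_distrib, Finset.prod_const,
          Finset.card_range, Finset.prod_pow_eq_pow_sum]
    _ = 1 - x ^ p := by
        rw [prod_sub_primroot hp hinv x, hsum, pow_mul, hζ.pow_eq_one, one_pow,
          Odd.neg_one_pow hodd']
        ring

/-- The parametrization `n ↦ p * n + (p - 1)` of `{ℓ | p ∣ ℓ + 1}`. -/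
def eS (p : ℕ) (hp0 : 0 < p) : ℕ ≃ {ℓ : ℕ | p ∣ (ℓ + 1)} where
  toFun n := ⟨p * n + (p - 1),
    ⟨n + 1, by rw [add_assoc, Nat.sub_add_cancel hp0, mul_add, mul_one]⟩⟩
  invFun ℓ := ((ℓ : ℕ) + 1) / p - 1
  left_inv n := by
    simp only
    rw [add_assoc, Nat.sub_add_cancel hp0, show p * n + p = p * (n + 1) by ring,
      Nat.mul_div_cancel_left _ hp0]
    omega
  right_inv := by
    rintro ⟨ℓ, hℓ⟩
    simp only [Set.mem_setOf_eq] at hℓ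
    obtain ⟨c, hc⟩ := hℓ
    have hc0 : c ≠ 0 := by rintro rfl; simp at hc
    obtain ⟨d, rfl⟩ := Nat.exists_eq_succ_of_ne_zero hc0
    simp only [Nat.succ_eq_add_one] at hc
    apply Subtype.ext
    simp only
    rw [hc, Nat.mul_div_cancel_left _ hp0]
    have h2 : ℓ + 1 = p * d + p := by rw [hc]; ring
    have h3 : p * (d + 1 - 1) + (p - 1) + 1 = p * d + p := by
      simp only [Nat.add_sub_cancel]
      rw [add_assoc, Nat.sub_add_cancel hp0]
    exact Nat.succ_injective (h3.trans h2.symm)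

lemma coe_eS (p : ℕ) (hp0 : 0 < p) (n : ℕ) :
    ((eS p hp0 n : ℕ)) = p * n + (p - 1) := rfl

end Stmt12Aux

open Stmt12Aux

theorem stmt_12 (p : ℕ) (hp : p.Prime) (hodd : Odd p) (q : ℂ) (hq : ‖q‖ < 1) :
    Fprod (q ^ p ^ 2) *
      ∏ k ∈ Finset.range p,
        Fprod (Complex.exp (2 * Real.pi * Complex.I / (p : ℂ)) ^ k * q)
      = Fprod (q ^ p) ^ (p + 1) := by
  classical
  have hp0 : 0 < p := hp.pos
  set ζ : ℂ := Complex.exp (2 * Real.pi * Complex.I / (p : ℂ)) with hζdef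
  have hζ : IsPrimitiveRoot ζ p := Complex.isPrimitiveRoot_exp p hp.ne_zero
  have habsζ : ‖ζ‖ = 1 := by
    rw [hζdef, show (2 * (Real.pi : ℂ) * Complex.I / (p : ℂ))
        = ((2 * Real.pi / p : ℝ) : ℂ) * Complex.I from by push_cast; ring]
    exact Complex.norm_exp_ofReal_mul_I _
  have habs : ∀ k : ℕ, ‖ζ ^ k * q‖ < 1 := by
    intro k
    rw [norm_mul, norm_pow, habsζ, one_pow, one_mul]
    exact hq
  have hqp : ‖q ^ p‖ < 1 := by
    rw [norm_pow]; exact pow_lt_one₀ (norm_nonneg _) hq hp.ne_zero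
  set A : ℕ → ℂ := fun ℓ =>
    if p ∣ (ℓ + 1) then (1 - q ^ (ℓ + 1)) ^ p else 1 - (q ^ p) ^ (ℓ + 1) with hA
  -- Step A+B : exchange finite and infinite products, compute the inner finite product
  have stepAB : (∏ k ∈ Finset.range p, Fprod (ζ ^ k * q)) = ∏' ℓ : ℕ, A ℓ := by
    simp only [Fprod]
    rw [← Multipliable.tprod_finsetProd (fun k _ => multipliable_F (habs k))]
    refine tprod_congr fun ℓ => ?_
    have hpow : ∀ k : ℕ, (ζ ^ k * q) ^ (ℓ + 1) = (ζ ^ (ℓ + 1)) ^ k * q ^ (ℓ + 1) := by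
      intro k
      rw [mul_pow, ← pow_mul, mul_comm k (ℓ + 1), pow_mul]
    by_cases hd : p ∣ (ℓ + 1)
    · simp only [hA, if_pos hd]
      have hz1 : ζ ^ (ℓ + 1) = 1 := (hζ.pow_eq_one_iff_dvd (ℓ + 1)).mpr hd
      calc ∏ k ∈ Finset.range p, (1 - (ζ ^ k * q) ^ (ℓ + 1))
          = ∏ k ∈ Finset.range p, (1 - q ^ (ℓ + 1)) := by
            refine Finset.prod_congr rfl fun k _ => ?_
            rw [hpow k, hz1, one_pow, one_mul]
        _ = (1 - q ^ (ℓ + 1)) ^ p := by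
            rw [Finset.prod_const, Finset.card_range]
    · simp only [hA, if_neg hd]
      have hζm : IsPrimitiveRoot (ζ ^ (ℓ + 1)) p :=
        hζ.pow_of_coprime _ ((Nat.Prime.coprime_iff_not_dvd hp).mpr hd).symm
      calc ∏ k ∈ Finset.range p, (1 - (ζ ^ k * q) ^ (ℓ + 1))
          = ∏ k ∈ Finset.range p, (1 - (ζ ^ (ℓ + 1)) ^ k * q ^ (ℓ + 1)) := by
            refine Finset.prod_congr rfl fun k _ => ?_
            rw [hpow k]
        _ = 1 - (q ^ (ℓ + 1)) ^ p := prod_one_sub_mul hp0 hodd hζm _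
        _ = 1 - (q ^ p) ^ (ℓ + 1) := by rw [← pow_mul, ← pow_mul, mul_comm]
  have hexp : ∀ n : ℕ, p * n + (p - 1) + 1 = p * (n + 1) := by
    intro n
    rw [add_assoc, Nat.sub_add_cancel hp0, mul_add, mul_one]
  have heS : ∀ n : ℕ, ((eS p hp0 n : ℕ)) = p * n + (p - 1) := coe_eS p hp0
  -- multipliability of A restricted to S and its complement
  have hMS : Multipliable (A ∘ ((↑) : {ℓ : ℕ | p ∣ (ℓ + 1)} → ℕ)) := by
    rw [← (eS p hp0).multipliable_iff]
    refine (multipliable_pow (multipliable_F hqp) p).congr fun n => ?_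
    have hdvd : p ∣ ((eS p hp0 n : ℕ) + 1) := (eS p hp0 n).2
    simp only [Function.comp_apply, hA]
    rw [if_pos hdvd, heS n, hexp n, pow_mul]
  have hMSc : Multipliable (A ∘ ((↑) : ↥{ℓ : ℕ | p ∣ (ℓ + 1)}ᶜ → ℕ)) := by
    refine (multipliable_F_subtype hqp {ℓ : ℕ | p ∣ (ℓ + 1)}ᶜ).congr fun b => ?_
    have hb : ¬ p ∣ ((b : ℕ) + 1) := b.2
    simp only [Function.comp_apply, hA]
    rw [if_neg hb]
  -- values of the two sub-products of A
  have hSval : (∏' ℓ : {ℓ : ℕ | p ∣ (ℓ + 1)}, A ℓ) = Fprod (q ^ p) ^ p := by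
    rw [← (eS p hp0).tprod_eq (fun s : {ℓ : ℕ | p ∣ (ℓ + 1)} => A s)]
    calc (∏' n : ℕ, A (eS p hp0 n))
        = ∏' n : ℕ, (1 - (q ^ p) ^ (n + 1)) ^ p := by
          refine tprod_congr fun n => ?_
          have hdvd : p ∣ ((eS p hp0 n : ℕ) + 1) := (eS p hp0 n).2
          simp only [hA]
          rw [if_pos hdvd, heS n, hexp n, pow_mul]
      _ = (∏' n : ℕ, (1 - (q ^ p) ^ (n + 1))) ^ p := tprod_pow (multipliable_F hqp) p
      _ = Fprod (q ^ p) ^ p := rfl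
  have hScval : (∏' ℓ : ↥{ℓ : ℕ | p ∣ (ℓ + 1)}ᶜ, A ℓ)
      = ∏' ℓ : ↥{ℓ : ℕ | p ∣ (ℓ + 1)}ᶜ, (1 - (q ^ p) ^ ((ℓ : ℕ) + 1)) := by
    refine tprod_congr fun b => ?_
    have hb : ¬ p ∣ ((b : ℕ) + 1) := b.2
    simp only [hA]
    rw [if_neg hb]
  -- split Fprod (q^p) along S
  have key2 : Fprod (q ^ p) =
      (∏' ℓ : {ℓ : ℕ | p ∣ (ℓ + 1)}, (1 - (q ^ p) ^ ((ℓ : ℕ) + 1))) *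
        ∏' ℓ : ↥{ℓ : ℕ | p ∣ (ℓ + 1)}ᶜ, (1 - (q ^ p) ^ ((ℓ : ℕ) + 1)) := by
    have h1 : Multipliable ((fun ℓ : ℕ => 1 - (q ^ p) ^ (ℓ + 1)) ∘
        ((↑) : {ℓ : ℕ | p ∣ (ℓ + 1)} → ℕ)) := multipliable_F_subtype hqp _
    have h2 : Multipliable ((fun ℓ : ℕ => 1 - (q ^ p) ^ (ℓ + 1)) ∘
        ((↑) : ↥{ℓ : ℕ | p ∣ (ℓ + 1)}ᶜ → ℕ)) := multipliable_F_subtype hqp _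
    exact (Multipliable.tprod_mul_tprod_compl h1 h2).symm
  have hS2 : (∏' ℓ : {ℓ : ℕ | p ∣ (ℓ + 1)}, (1 - (q ^ p) ^ ((ℓ : ℕ) + 1)))
      = Fprod (q ^ p ^ 2) := by
    rw [← (eS p hp0).tprod_eq
      (fun s : {ℓ : ℕ | p ∣ (ℓ + 1)} => (1 - (q ^ p) ^ ((s : ℕ) + 1)))]
    refine tprod_congr fun n => ?_
    rw [heS n, hexp n, ← pow_mul, ← pow_mul,
      show p * (p * (n + 1)) = p ^ 2 * (n + 1) by ring]
  have key3 : Fprod (q ^ p) =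
      Fprod (q ^ p ^ 2) * ∏' ℓ : ↥{ℓ : ℕ | p ∣ (ℓ + 1)}ᶜ, (1 - (q ^ p) ^ ((ℓ : ℕ) + 1)) := by
    rw [key2, hS2]
  rw [stepAB, ← Multipliable.tprod_mul_tprod_compl (s := {ℓ : ℕ | p ∣ (ℓ + 1)}) hMS hMSc, hSval, hScval]
  calc Fprod (q ^ p ^ 2) * (Fprod (q ^ p) ^ p *
        ∏' ℓ : ↥{ℓ : ℕ | p ∣ (ℓ + 1)}ᶜ, (1 - (q ^ p) ^ ((ℓ : ℕ) + 1)))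
      = Fprod (q ^ p) ^ p * (Fprod (q ^ p ^ 2) *
        ∏' ℓ : ↥{ℓ : ℕ | p ∣ (ℓ + 1)}ᶜ, (1 - (q ^ p) ^ ((ℓ : ℕ) + 1))) := by ring
    _ = Fprod (q ^ p) ^ p * Fprod (q ^ p) := by rw [← key3]
    _ = Fprod (q ^ p) ^ (p + 1) := by rw [pow_succ]
end

section
/- Let n ≥ 1 be an integer. Then the number of triplets (u, v, w) of nonnegative integers satisfying gcd(u, v, w) = 1, u·w = n, and 0 ≤ v < w, equals ψ(n) = n · ∏_{p | n} (1 + 1/p); equivalently, ∑_{w | n} ω(n/w, w) = ψ(n). -/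
/-- ω(a, b) = #{k : 0 ≤ k < b, gcd(a, b, k) = 1}. -/
def omegaE (a b : ℕ) : ℕ :=
  ((Finset.range b).filter (fun k => Nat.gcd a (Nat.gcd b k) = 1)).card

open Finset

lemma count_coprime_range (d m : ℕ) (hd : 0 < d) :
    ((Finset.range (d * m)).filter (fun k => Nat.Coprime d k)).card = m * d.totient := by
  induction m with
  | zero => simp
  | succ m ih =>
    have hr : Finset.range (d * (m + 1)) =
        Finset.range (d * m) ∪ Finset.Ico (d * m) (d * m + d) := by
      rw [Finset.range_eq_Ico, Finset.range_eq_Ico,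
        Finset.Ico_union_Ico_eq_Ico (Nat.zero_le _) (Nat.le_add_right _ _)]
      rw [Nat.mul_succ]
    rw [hr, Finset.filter_union, Finset.card_union_of_disjoint, ih,
      Nat.filter_coprime_Ico_eq_totient d (d * m)]
    · ring
    · exact Finset.disjoint_filter_filter
        (Finset.disjoint_left.2 (by intro x hx hx'; simp at hx hx'; omega))

lemma count_coprime_range' (d b : ℕ) (hd : 0 < d) (hdvd : d ∣ b) :
    ((Finset.range b).filter (fun k => Nat.Coprime d k)).card = (b / d) * d.totient := by
  obtain ⟨m, rfl⟩ := hdvd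
  rw [count_coprime_range d m hd, Nat.mul_div_cancel_left _ hd]

lemma omegaE_eq (a b : ℕ) (hb : 0 < b) :
    omegaE a b = (b / Nat.gcd a b) * (Nat.gcd a b).totient := by
  have hd : 0 < Nat.gcd a b := Nat.gcd_pos_of_pos_right a hb
  unfold omegaE
  have h1 : ∀ k, (Nat.gcd a (Nat.gcd b k) = 1) = (Nat.Coprime (Nat.gcd a b) k) := by
    intro k
    rw [← Nat.gcd_assoc]
  simp only [h1]
  exact count_coprime_range' _ _ hd (Nat.gcd_dvd_right a b)

def fpsi (n : ℕ) : ℕ := ∑ w ∈ n.divisors, omegaE (n / w) w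

lemma fpsi_one : fpsi 1 = 1 := by decide

lemma omegaE_mul {m n d₁ d₂ : ℕ} (hmn : Nat.Coprime m n) (h₁ : d₁ ∣ m) (h₂ : d₂ ∣ n)
    (hd₁ : 0 < d₁) (hd₂ : 0 < d₂) :
    omegaE (m * n / (d₁ * d₂)) (d₁ * d₂) = omegaE (m / d₁) d₁ * omegaE (n / d₂) d₂ := by
  set a₁ := m / d₁ with ha₁def
  set a₂ := n / d₂ with ha₂def
  have ha₁ : a₁ ∣ m := Nat.div_dvd_of_dvd h₁
  have ha₂ : a₂ ∣ n := Nat.div_dvd_of_dvd h₂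
  have key : m * n / (d₁ * d₂) = a₁ * a₂ := (Nat.div_mul_div_comm h₁ h₂).symm
  rw [key, omegaE_eq _ _ (Nat.mul_pos hd₁ hd₂), omegaE_eq _ _ hd₁, omegaE_eq _ _ hd₂]
  have c12 : Nat.Coprime d₁ d₂ :=
    Nat.Coprime.coprime_dvd_left h₁ (Nat.Coprime.coprime_dvd_right h₂ hmn)
  have ca₂d₁ : Nat.Coprime a₂ d₁ :=
    Nat.Coprime.coprime_dvd_left ha₂ (Nat.Coprime.coprime_dvd_right h₁ hmn.symm)
  have ca₁d₂ : Nat.Coprime a₁ d₂ :=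
    Nat.Coprime.coprime_dvd_left ha₁ (Nat.Coprime.coprime_dvd_right h₂ hmn)
  have hg : Nat.gcd (a₁ * a₂) (d₁ * d₂) = Nat.gcd a₁ d₁ * Nat.gcd a₂ d₂ := by
    rw [Nat.Coprime.gcd_mul _ c12, Nat.Coprime.gcd_mul_right_cancel a₁ ca₂d₁,
      Nat.Coprime.gcd_mul_left_cancel a₂ ca₁d₂]
  have cg : Nat.Coprime (Nat.gcd a₁ d₁) (Nat.gcd a₂ d₂) :=
    Nat.Coprime.coprime_dvd_left (Nat.gcd_dvd_right a₁ d₁)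
      (Nat.Coprime.coprime_dvd_right (Nat.gcd_dvd_right a₂ d₂) c12)
  rw [hg, Nat.totient_mul cg,
    ← Nat.div_mul_div_comm (Nat.gcd_dvd_right a₁ d₁) (Nat.gcd_dvd_right a₂ d₂)]
  ring

lemma fpsi_mult (m n : ℕ) (hmn : Nat.Coprime m n) : fpsi (m * n) = fpsi m * fpsi n := by
  rcases Nat.eq_zero_or_pos m with rfl | hm
  · have : n = 1 := by simpa [Nat.Coprime] using hmn
    subst this
    simp [fpsi]
  rcases Nat.eq_zero_or_pos n with rfl | hn
  · have : m = 1 := by simpa [Nat.Coprime] using hmn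
    subst this
    simp [fpsi]
  unfold fpsi
  rw [Finset.sum_mul_sum, ← Finset.sum_product']
  refine (Finset.sum_nbij' (fun w => (Nat.gcd w m, Nat.gcd w n)) (fun p => p.1 * p.2)
    ?_ ?_ ?_ ?_ ?_).symm.symm
  · intro w hw
    rw [Nat.mem_divisors] at hw
    simp only [Finset.mem_product, Nat.mem_divisors]
    exact ⟨⟨Nat.gcd_dvd_right w m, hm.ne'⟩, ⟨Nat.gcd_dvd_right w n, hn.ne'⟩⟩
  · intro p hp
    simp only [Finset.mem_product, Nat.mem_divisors] at hp
    exact Nat.mem_divisors.2 ⟨mul_dvd_mul hp.1.1 hp.2.1, by positivity⟩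
  · intro w hw
    exact (Nat.gcd_mul_gcd_eq_iff_dvd_mul_of_coprime hmn).2 (Nat.mem_divisors.1 hw).1
  · intro p hp
    simp only [Finset.mem_product, Nat.mem_divisors] at hp
    have c1 : Nat.Coprime p.2 m := Nat.Coprime.coprime_dvd_left hp.2.1 hmn.symm
    have c2 : Nat.Coprime p.1 n := Nat.Coprime.coprime_dvd_left hp.1.1 hmn
    have e1 : Nat.gcd (p.1 * p.2) m = p.1 := by
      rw [Nat.Coprime.gcd_mul_right_cancel p.1 c1, Nat.gcd_eq_left hp.1.1]
    have e2 : Nat.gcd (p.1 * p.2) n = p.2 := by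
      rw [Nat.Coprime.gcd_mul_left_cancel p.2 c2, Nat.gcd_eq_left hp.2.1]
    exact Prod.ext e1 e2
  · intro w hw
    have hwdvd := (Nat.mem_divisors.1 hw).1
    have hw' : Nat.gcd w m * Nat.gcd w n = w :=
      (Nat.gcd_mul_gcd_eq_iff_dvd_mul_of_coprime hmn).2 hwdvd
    have h1 : Nat.gcd w m ∣ m := Nat.gcd_dvd_right w m
    have h2 : Nat.gcd w n ∣ n := Nat.gcd_dvd_right w n
    have hp1 : 0 < Nat.gcd w m := Nat.gcd_pos_of_pos_right w hm
    have hp2 : 0 < Nat.gcd w n := Nat.gcd_pos_of_pos_right w hn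
    calc omegaE (m * n / w) w
        = omegaE (m * n / (Nat.gcd w m * Nat.gcd w n)) (Nat.gcd w m * Nat.gcd w n) := by
          rw [hw']
      _ = omegaE (m / Nat.gcd w m) (Nat.gcd w m) * omegaE (n / Nat.gcd w n) (Nat.gcd w n) :=
          omegaE_mul hmn h1 h2 hp1 hp2

lemma geom_sum_aux (p : ℕ) (hp : 0 < p) :
    ∀ t s, s ≤ t → ∑ j ∈ Finset.Ico s t, (p - 1) * p ^ j = p ^ t - p ^ s := by
  intro t
  induction t with
  | zero =>
    intro s hs
    interval_cases s
    simp
  | succ t ih =>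
    intro s hs
    rcases Nat.lt_or_ge s (t + 1) with h | h
    · have hst : s ≤ t := by omega
      rw [Finset.sum_Ico_succ_top hst, ih s hst]
      have h1 : p ^ s ≤ p ^ t := Nat.pow_le_pow_right hp hst
      have h2 : p ^ t ≤ p * p ^ t := Nat.le_mul_of_pos_left _ hp
      have h3 : p ^ (t + 1) = p * p ^ t := by rw [pow_succ]; ring
      rw [h3, Nat.sub_mul, one_mul]
      omega
    · have : s = t + 1 := by omega
      subst this
      simp

lemma fpsi_prime_pow (p a : ℕ) (hp : p.Prime) (ha : 1 ≤ a) :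
    fpsi (p ^ a) = p ^ a + p ^ (a - 1) := by
  have hp1 : 0 < p := hp.pos
  unfold fpsi
  rw [Nat.sum_divisors_prime_pow hp]
  set b := a / 2 with hbdef
  have hb1 : b + 1 ≤ a + 1 := by omega
  have hba : b + 1 ≤ a := by omega
  rw [Finset.range_eq_Ico, ← Finset.sum_Ico_consecutive _ (Nat.zero_le (b + 1)) hb1]
  have S1 : ∑ j ∈ Finset.Ico 0 (b + 1), omegaE (p ^ a / p ^ j) (p ^ j) = p ^ b := by
    have : ∀ j ∈ Finset.Ico 0 (b + 1), omegaE (p ^ a / p ^ j) (p ^ j) = (p ^ j).totient := by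
      intro j hj
      simp only [Finset.mem_Ico] at hj
      have hja : j ≤ a := by omega
      have hjj : j ≤ a - j := by omega
      rw [Nat.pow_div hja hp1, omegaE_eq _ _ (pow_pos hp1 j),
        Nat.gcd_eq_right (pow_dvd_pow p hjj), Nat.div_self (pow_pos hp1 j), one_mul]
    rw [Finset.sum_congr rfl this, ← Finset.range_eq_Ico, ← Nat.sum_divisors_prime_pow hp]
    exact Nat.sum_totient (p ^ b)
  have S2 : ∑ j ∈ Finset.Ico (b + 1) (a + 1), omegaE (p ^ a / p ^ j) (p ^ j)
      = (p ^ (a - 1) - p ^ b) + p ^ a := by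
    rw [Finset.sum_Ico_succ_top hba]
    have hlast : omegaE (p ^ a / p ^ a) (p ^ a) = p ^ a := by
      rw [Nat.div_self (pow_pos hp1 a), omegaE_eq _ _ (pow_pos hp1 a),
        Nat.gcd_one_left, Nat.div_one, Nat.totient_one, mul_one]
    have hmid : ∀ j ∈ Finset.Ico (b + 1) a,
        omegaE (p ^ a / p ^ j) (p ^ j) = (p - 1) * p ^ (j - 1) := by
      intro j hj
      simp only [Finset.mem_Ico] at hj
      have hja : j ≤ a := by omega
      have haj : a - j ≤ j := by omega
      have haj1 : 1 ≤ a - j := by omega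
      rw [Nat.pow_div hja hp1, omegaE_eq _ _ (pow_pos hp1 j),
        Nat.gcd_eq_left (pow_dvd_pow p haj), Nat.pow_div haj hp1,
        Nat.totient_prime_pow hp haj1]
      rw [show p ^ (j - (a - j)) * (p ^ (a - j - 1) * (p - 1))
          = (p - 1) * (p ^ (j - (a - j)) * p ^ (a - j - 1)) from by ring, ← pow_add]
      congr 2
      omega
    rw [Finset.sum_congr rfl hmid]
    have hmap : Finset.Ico (b + 1) a = (Finset.Ico b (a - 1)).map (addRightEmbedding 1) := by
      rw [Finset.map_add_right_Ico]
      congr 1 <;> omega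
    rw [hmap, Finset.sum_map]
    have : ∀ i ∈ Finset.Ico b (a - 1),
        (p - 1) * p ^ (addRightEmbedding 1 i - 1) = (p - 1) * p ^ i := by
      intro i _
      simp [addRightEmbedding_apply]
    rw [Finset.sum_congr rfl this, geom_sum_aux p hp1 (a - 1) b (by omega), hlast]
  rw [S1, S2]
  have h1 : p ^ b ≤ p ^ (a - 1) := Nat.pow_le_pow_right hp1 (by omega)
  omega

lemma fpsi_cast (n : ℕ) (hn : n ≠ 0) :
    (fpsi n : ℚ) = n * ∏ p ∈ n.primeFactors, (1 + 1 / (p : ℚ)) := by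
  have hcast : ((n : ℚ)) = ∏ p ∈ n.primeFactors, (p : ℚ) ^ n.factorization p := by
    conv_lhs => rw [← Nat.factorization_prod_pow_eq_self hn]
    rw [Finsupp.prod, Nat.support_factorization]
    push_cast
    rfl
  rw [Nat.multiplicative_factorization fpsi fpsi_mult fpsi_one hn, Finsupp.prod,
    Nat.support_factorization, Nat.cast_prod, hcast, ← Finset.prod_mul_distrib]
  apply Finset.prod_congr rfl
  intro p hp
  have hp' : p.Prime := Nat.prime_of_mem_primeFactors hp
  have ha : 1 ≤ n.factorization p := by
    have := Nat.support_factorization n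
    have hmem : p ∈ n.factorization.support := by rw [this]; exact hp
    have := Finsupp.mem_support_iff.1 hmem
    omega
  rw [fpsi_prime_pow p _ hp' ha]
  have hpQ : (p : ℚ) ≠ 0 := by exact_mod_cast hp'.pos.ne'
  push_cast
  have hpow : (p : ℚ) ^ (n.factorization p) = (p : ℚ) ^ (n.factorization p - 1) * p := by
    rw [← pow_succ]
    congr 1
    omega
  rw [hpow]
  field_simp

lemma card_triples (n : ℕ) (hn : 1 ≤ n) :
    ((Finset.range (n + 1) ×ˢ Finset.range (n + 1) ×ˢ Finset.range (n + 1)).filter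
        (fun t : ℕ × ℕ × ℕ =>
          Nat.gcd t.1 (Nat.gcd t.2.1 t.2.2) = 1 ∧ t.1 * t.2.2 = n ∧ t.2.1 < t.2.2)).card
      = fpsi n := by
  rw [Finset.card_eq_sum_card_fiberwise (f := fun t : ℕ × ℕ × ℕ => t.2.2) (t := n.divisors)
    (by
      intro t ht
      simp only [Finset.mem_coe, Finset.mem_filter] at ht
      obtain ⟨-, -, hmul, hlt⟩ := ht
      exact Nat.mem_divisors.2 ⟨Dvd.intro_left _ hmul, by omega⟩)]
  unfold fpsi
  apply Finset.sum_congr rfl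
  intro w hw
  obtain ⟨hwdvd, hn0⟩ := Nat.mem_divisors.1 hw
  have hw0 : 0 < w := Nat.pos_of_dvd_of_pos hwdvd hn
  have hwle : w ≤ n := Nat.le_of_dvd hn hwdvd
  unfold omegaE
  refine Finset.card_bij' (fun t _ => t.2.1) (fun v _ => (n / w, v, w)) ?hi ?hj ?left ?right
  case hi =>
    intro t ht
    simp only [Finset.mem_filter] at ht
    obtain ⟨⟨-, hgcd, hmul, hlt⟩, hfib⟩ := ht
    have ht1 : t.1 = n / w := by
      rw [← hmul, hfib, Nat.mul_div_cancel _ hw0]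
    rw [Finset.mem_filter, Finset.mem_range]
    constructor
    · show t.2.1 < w
      omega
    · show (n / w).gcd (w.gcd t.2.1) = 1
      rw [Nat.gcd_comm w t.2.1, ← ht1, ← hfib]
      exact hgcd
  case hj =>
    intro v hv
    rw [Finset.mem_filter, Finset.mem_range] at hv
    obtain ⟨hvw, hvg⟩ := hv
    have hdle : n / w ≤ n := Nat.div_le_self n w
    beta_reduce
    refine Finset.mem_filter.2 ⟨Finset.mem_filter.2 ⟨Finset.mem_product.2
      ⟨Finset.mem_range.2 (show n / w < n + 1 by omega), Finset.mem_product.2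
        ⟨Finset.mem_range.2 (show v < n + 1 by omega),
         Finset.mem_range.2 (show w < n + 1 by omega)⟩⟩,
      ?_, Nat.div_mul_cancel hwdvd, hvw⟩, rfl⟩
    show (n / w).gcd (v.gcd w) = 1
    rw [Nat.gcd_comm v w]
    exact hvg
  case left =>
    intro t ht
    simp only [Finset.mem_filter] at ht
    obtain ⟨⟨-, hgcd, hmul, hlt⟩, hfib⟩ := ht
    have ht1 : t.1 = n / w := by
      rw [← hmul, hfib, Nat.mul_div_cancel _ hw0]
    exact Prod.ext ht1.symm (Prod.ext rfl hfib.symm)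
  case right =>
    intro v hv
    rfl

/-- The number of triplets (u,v,w) of nonnegative integers with gcd(u,v,w) = 1, u·w = n and
0 ≤ v < w equals ψ(n) = n·∏_{p | n}(1 + 1/p); equivalently ∑_{w | n} ω(n/w, w) = ψ(n). -/
theorem stmt_17 (n : ℕ) (hn : 1 ≤ n)
    (k : ℕ) (hk : (k : ℚ) = n * ∏ p ∈ n.primeFactors, (1 + 1 / (p : ℚ))) :
    ((Finset.range (n + 1) ×ˢ Finset.range (n + 1) ×ˢ Finset.range (n + 1)).filter
        (fun t : ℕ × ℕ × ℕ =>
          Nat.gcd t.1 (Nat.gcd t.2.1 t.2.2) = 1 ∧ t.1 * t.2.2 = n ∧ t.2.1 < t.2.2)).card = k ∧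
    ∑ w ∈ n.divisors, omegaE (n / w) w = k := by
  have hfk : fpsi n = k := by
    have : (fpsi n : ℚ) = (k : ℚ) := by rw [fpsi_cast n (by omega), hk]
    exact_mod_cast this
  exact ⟨by rw [card_triples n hn, hfk], hfk⟩
end

section
/- Let p be an odd prime and α ≥ 1 an integer. Then ∏_{d | p^α} d^{ω(d, p^α/d)} = p^{(p^α − 1)/(p − 1)}; consequently, the square of this product equals p^{2(p^α − 1)/(p − 1)}. -/
lemma omegaE_prime_pow (p : ℕ) (hp : p.Prime) (i m : ℕ) (hi : 1 ≤ i) :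
    omegaE (p ^ i) (p ^ m) = Nat.totient (p ^ m) := by
  unfold omegaE
  rw [Nat.totient]
  congr 1
  apply Finset.filter_congr
  intro k hk
  simp only [Nat.Coprime]
  constructor
  · intro h
    by_contra hg
    set g := Nat.gcd (p ^ m) k with hgdef
    have hgdvd : g ∣ p ^ m := Nat.gcd_dvd_left _ _
    obtain ⟨e, he, hge⟩ := (Nat.dvd_prime_pow hp).1 hgdvd
    have he1 : 1 ≤ e := by
      rcases Nat.eq_zero_or_pos e with h0 | h0
      · exact absurd (by simp [hge, h0]) hg
      · exact h0
    have hpg : p ∣ g := hge ▸ dvd_pow_self p (by omega : e ≠ 0)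
    have hpi : p ∣ p ^ i := dvd_pow_self p (by omega : i ≠ 0)
    have : p ∣ 1 := h ▸ Nat.dvd_gcd hpi hpg
    exact hp.one_lt.ne' (Nat.eq_one_of_dvd_one this)
  · intro h
    rw [h, Nat.gcd_one_right]

lemma sum_totient_prime_pow (p : ℕ) (hp : p.Prime) (n : ℕ) :
    ∑ j ∈ Finset.range (n + 1), Nat.totient (p ^ j) = p ^ n := by
  induction n with
  | zero => simp
  | succ n ih =>
    rw [Finset.sum_range_succ, ih, Nat.totient_prime_pow hp (Nat.succ_pos n)]
    have : n + 1 - 1 = n := rfl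
    rw [this]
    have hp1 : 1 ≤ p := hp.one_lt.le
    have : p ^ n + p ^ n * (p - 1) = p ^ n * (1 + (p - 1)) := by ring
    rw [this, Nat.add_sub_cancel' hp1, pow_succ]

lemma sum_weighted_totient (p : ℕ) (hp : p.Prime) (n : ℕ) :
    ∑ j ∈ Finset.range (n + 1), (n - j) * Nat.totient (p ^ j)
      = ∑ j ∈ Finset.range n, p ^ j := by
  induction n with
  | zero => simp
  | succ n ih =>
    rw [Finset.sum_range_succ (n := n + 1), Nat.sub_self, zero_mul, add_zero]
    have : ∀ j ∈ Finset.range (n + 1),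
        (n + 1 - j) * Nat.totient (p ^ j)
          = (n - j) * Nat.totient (p ^ j) + Nat.totient (p ^ j) := by
      intro j hj
      have hj' : j ≤ n := Nat.lt_succ_iff.1 (Finset.mem_range.1 hj)
      have : n + 1 - j = (n - j) + 1 := by omega
      rw [this, add_mul, one_mul]
    rw [Finset.sum_congr rfl this, Finset.sum_add_distrib, ih,
      sum_totient_prime_pow p hp, Finset.sum_range_succ]

lemma geom_sum_eq_div (p : ℕ) (hp : 2 ≤ p) (n : ℕ) :
    (p ^ n - 1) / (p - 1) = ∑ j ∈ Finset.range n, p ^ j := by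
  have key : (p - 1) * (∑ j ∈ Finset.range n, p ^ j) + 1 = p ^ n := by
    induction n with
    | zero => simp
    | succ n ih =>
      rw [Finset.sum_range_succ, mul_add, pow_succ]
      have h2 : (p - 1) * p ^ n = p ^ n * p - p ^ n := by
        rw [Nat.sub_mul, one_mul, mul_comm]
      have h3 : p ^ n ≤ p ^ n * p := Nat.le_mul_of_pos_right _ (by omega)
      omega
  have h1 : p ^ n - 1 = (p - 1) * (∑ j ∈ Finset.range n, p ^ j) := by omega
  rw [h1, Nat.mul_div_cancel_left _ (by omega)]

theorem stmt_18 (p : ℕ) (hp : p.Prime) (hodd : Odd p) (α : ℕ) (hα : 1 ≤ α) :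
    (∏ d ∈ (p ^ α).divisors, d ^ omegaE d (p ^ α / d)) = p ^ ((p ^ α - 1) / (p - 1)) ∧
    (∏ d ∈ (p ^ α).divisors, d ^ omegaE d (p ^ α / d)) ^ 2
      = p ^ (2 * ((p ^ α - 1) / (p - 1))) := by
  have main : (∏ d ∈ (p ^ α).divisors, d ^ omegaE d (p ^ α / d))
      = p ^ ((p ^ α - 1) / (p - 1)) := by
    rw [Nat.divisors_prime_pow hp, Finset.prod_map]
    simp only [Function.Embedding.coeFn_mk]
    have step1 : ∀ i ∈ Finset.range (α + 1),
        (p ^ i) ^ omegaE (p ^ i) (p ^ α / p ^ i)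
          = p ^ (i * Nat.totient (p ^ (α - i))) := by
      intro i hi
      have hiα : i ≤ α := Nat.lt_succ_iff.1 (Finset.mem_range.1 hi)
      rcases Nat.eq_zero_or_pos i with h0 | h0
      · subst h0; simp
      · rw [Nat.pow_div hiα hp.pos, omegaE_prime_pow p hp i (α - i) h0, pow_mul]
    rw [Finset.prod_congr rfl step1, Finset.prod_pow_eq_pow_sum]
    congr 1
    have hrefl := Finset.sum_range_reflect
      (fun j => (α - j) * Nat.totient (p ^ j)) (α + 1)
    have hcong : ∀ i ∈ Finset.range (α + 1),
        (α - (α + 1 - 1 - i)) * Nat.totient (p ^ (α + 1 - 1 - i))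
          = i * Nat.totient (p ^ (α - i)) := by
      intro i hi
      have hiα : i ≤ α := Nat.lt_succ_iff.1 (Finset.mem_range.1 hi)
      have h1 : α + 1 - 1 - i = α - i := by omega
      have h2 : α - (α - i) = i := by omega
      rw [h1, h2]
    rw [← Finset.sum_congr rfl hcong, hrefl, sum_weighted_totient p hp,
      geom_sum_eq_div p hp.two_le]
  refine ⟨main, ?_⟩
  rw [main, ← pow_mul, mul_comm]
end
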